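/- Tent space duality pairing inequality: Let α > 0 and p, q ∈ (1,∞), and let p′, q′ denote the Hölder conjugates of p and q. Then for all measurable functions f, g on X⁺, ∬_{X⁺} |f(y,t)| |g(y,t)| dμ(y) dt/t ≤ ‖A_q^α(f)‖_{L^p(X)} ‖A_{q′}^α(g)‖_{L^{p′}(X)}. -/

import Mathlib

open MeasureTheory Metric Set
open scoped ENNReal NNReal

noncomputable section

variable {X : Type*}

/-- The measure `dμ(y) dt/t` on `X⁺ = X × (0,∞)`, modelled on `X × ℝ`
(supported on `{t > 0}`). -/
def upHalf [MeasurableSpace X] (μ : Measure X) : Measure (X × ℝ) :=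
  μ.prod ((volume.restrict (Set.Ioi (0:ℝ))).withDensity fun t => ENNReal.ofReal t⁻¹)

/-- The measure `dμ(y) dt` on `X⁺` (supported on `{t > 0}`). -/
def upHalf' [MeasurableSpace X] (μ : Measure X) : Measure (X × ℝ) :=
  μ.prod (volume.restrict (Set.Ioi (0:ℝ)))

/-- Cone of aperture `α` with vertex `x`. -/
def coneAt [PseudoMetricSpace X] (α : ℝ) (x : X) : Set (X × ℝ) :=
  {p | dist p.1 x < α * p.2}

/-- Tent of aperture `α` over `O ⊆ X`: the complement in `X⁺` of the union of the
cones of aperture `α` with vertices outside `O`. -/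
def tentOver [PseudoMetricSpace X] (α : ℝ) (O : Set X) : Set (X × ℝ) :=
  {p | 0 < p.2 ∧ ∀ x ∉ O, α * p.2 ≤ dist p.1 x}

/-- The `α`-shadow of `C ⊆ X⁺`: points whose cone meets `C`. -/
def shadowOf [PseudoMetricSpace X] (α : ℝ) (C : Set (X × ℝ)) : Set X :=
  {x | ∃ p ∈ C, p ∈ coneAt α x}

/-- The operator `A_q^α`:
`A_q^α(f)(x) = (∬_{Γ^α(x)} |f(y,t)|^q dμ(y)/V(y,αt) dt/t)^{1/q}`. -/
def Afun [PseudoMetricSpace X] [MeasurableSpace X] (μ : Measure X) (q α : ℝ)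
    (f : X × ℝ → ℝ) (x : X) : ℝ≥0∞ :=
  (∫⁻ p in coneAt α x,
      ENNReal.ofReal (|f p| ^ q) / μ (ball p.1 (α * p.2)) ∂upHalf μ) ^ (1/q)

/-- The truncated operator `A_q^α(·|h)`, integrating over the truncated cone
`Γ_h^α(x)`. -/
def AfunT [PseudoMetricSpace X] [MeasurableSpace X] (μ : Measure X) (q α h : ℝ)
    (f : X × ℝ → ℝ) (x : X) : ℝ≥0∞ :=
  (∫⁻ p in coneAt α x ∩ {p : X × ℝ | p.2 < h},
      ENNReal.ofReal (|f p| ^ q) / μ (ball p.1 (α * p.2)) ∂upHalf μ) ^ (1/q)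

/-- The Carleson operator `C_q^α`:
`C_q^α(f)(x) = sup_{B ∋ x} (μ(B)⁻¹ ∬_{T^α(B)} |f(y,t)|^q dμ(y) dt/t)^{1/q}`,
the supremum being over open balls containing `x`. -/
def Cfun [PseudoMetricSpace X] [MeasurableSpace X] (μ : Measure X) (q α : ℝ)
    (f : X × ℝ → ℝ) (x : X) : ℝ≥0∞ :=
  ⨆ (z : X) (ρ : ℝ) (_ : 0 < ρ ∧ x ∈ ball z ρ),
    ((μ (ball z ρ))⁻¹ *
      ∫⁻ p in tentOver α (ball z ρ), ENNReal.ofReal (|f p| ^ q) ∂upHalf μ) ^ (1/q)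

/-- The tent space quasi-norm `‖f‖_{T^{p,q,α}} = ‖A_q^α(f)‖_{L^p(X)}`. -/
def tNorm [PseudoMetricSpace X] [MeasurableSpace X] (μ : Measure X) (p q α : ℝ)
    (f : X × ℝ → ℝ) : ℝ≥0∞ :=
  (∫⁻ x, Afun μ q α f x ^ p ∂μ) ^ (1/p)

/-- The uncentred Hardy–Littlewood maximal operator applied to an
`ℝ≥0∞`-valued function. -/
def maxFun [PseudoMetricSpace X] [MeasurableSpace X] (μ : Measure X)
    (g : X → ℝ≥0∞) (x : X) : ℝ≥0∞ :=
  ⨆ (z : X) (ρ : ℝ) (_ : 0 < ρ ∧ x ∈ ball z ρ),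
    (μ (ball z ρ))⁻¹ * ∫⁻ y in ball z ρ, g y ∂μ

/-- `μ` is doubling: `V(x,2r) ≤ C V(x,r)` for all `x`, `r > 0`. -/
def DoublingMeas [PseudoMetricSpace X] [MeasurableSpace X] (μ : Measure X) : Prop :=
  ∃ C > (0:ℝ), ∀ (x : X) (r : ℝ), 0 < r →
    μ (ball x (2 * r)) ≤ ENNReal.ofReal C * μ (ball x r)


/-- A metric space carrying a Borel measure that is positive and finite on all balls
is second countable. -/
lemma secondCountable_of_ball_pos_finite {X : Type*} [MetricSpace X] [MeasurableSpace X]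
    [BorelSpace X] (μ : Measure X)
    (hpos : ∀ (x : X) (r : ℝ), 0 < r → 0 < μ (ball x r))
    (hfin : ∀ (x : X) (r : ℝ), 0 < r → μ (ball x r) < ∞) :
    SecondCountableTopology X := by
  refine Metric.secondCountable_of_almost_dense_set fun ε hε => ?_
  rcases isEmpty_or_nonempty X with h | h
  · exact ⟨∅, countable_empty, fun x => (h.false x).elim⟩
  obtain ⟨x₀⟩ := h
  -- a maximal `ε`-separated set
  have hz : ∀ c ⊆ {S : Set X | S.Pairwise fun a b => ε ≤ dist a b}, IsChain (· ⊆ ·) c →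
      ∃ ub ∈ {S : Set X | S.Pairwise fun a b => ε ≤ dist a b}, ∀ s ∈ c, s ⊆ ub := by
    intro c hc hchain
    refine ⟨⋃₀ c, ?_, fun s hs => subset_sUnion_of_mem hs⟩
    intro a ha b hb hab
    obtain ⟨s, hsc, has⟩ := ha
    obtain ⟨t, htc, hbt⟩ := hb
    rcases hchain.total hsc htc with hst | hts
    · exact hc htc (hst has) hbt hab
    · exact hc hsc has (hts hbt) hab
  obtain ⟨S, hS⟩ := zorn_subset {S : Set X | S.Pairwise fun a b => ε ≤ dist a b} hz
  have hSsep : S.Pairwise fun a b => ε ≤ dist a b := hS.1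
  -- maximality: every point is within `ε` of `S`
  have hdense : ∀ x : X, ∃ y ∈ S, dist x y ≤ ε := by
    intro x
    by_contra hcon
    push_neg at hcon
    have hmem : insert x S ∈ {S : Set X | S.Pairwise fun a b => ε ≤ dist a b} := by
      haveI : Std.Symm (fun a b : X => ε ≤ dist a b) := ⟨fun a b (h : ε ≤ dist a b) => by rwa [dist_comm]⟩
      rw [Set.mem_setOf_eq, Set.pairwise_insert_of_symm]
      exact ⟨hSsep, fun b hb _ => le_of_lt (hcon b hb)⟩
    have hxS : x ∈ S := hS.2 hmem (subset_insert x S) (mem_insert x S)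
    have := hcon x hxS
    simp at this
    linarith
  -- countability of `S`
  have hcount : S.Countable := by
    have hunion : S = ⋃ n : ℕ, S ∩ ball x₀ n := by
      ext x
      simp only [Set.mem_iUnion, Set.mem_inter_iff, mem_ball]
      refine ⟨fun hx => ?_, fun ⟨n, hn, _⟩ => hn⟩
      obtain ⟨n, hn⟩ := exists_nat_gt (dist x x₀)
      exact ⟨n, hx, hn⟩
    rw [hunion]
    refine Set.countable_iUnion fun n => ?_
    set T := S ∩ ball x₀ (n : ℝ) with hT
    have key : Set.Countable {i : T | 0 < μ (ball (i : X) (ε / 2))} := by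
      apply MeasureTheory.Measure.countable_meas_pos_of_disjoint_of_meas_iUnion_ne_top μ
        (fun i : T => measurableSet_ball (x := (i : X)) (ε := ε / 2))
      · intro i j hij
        have hne : (i : X) ≠ (j : X) := fun h => hij (Subtype.coe_injective h)
        have : ε ≤ dist (i : X) (j : X) := hSsep i.2.1 j.2.1 hne
        exact ball_disjoint_ball (by linarith)
      · have hsub : (⋃ i : T, ball (i : X) (ε / 2)) ⊆ ball x₀ ((n : ℝ) + ε) := by
          rintro z hz
          simp only [Set.mem_iUnion] at hz
          obtain ⟨i, hi⟩ := hz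
          have h1 : dist (i : X) x₀ < n := i.2.2
          have h2 : dist z (i : X) < ε / 2 := hi
          have := dist_triangle z (i : X) x₀
          rw [mem_ball]
          linarith
        have : μ (⋃ i : T, ball (i : X) (ε / 2)) < ∞ := by
          rcases le_or_gt ((n : ℝ) + ε) 0 with h0 | h0
          · refine lt_of_le_of_lt (measure_mono hsub) ?_
            rw [ball_eq_empty.2 h0]
            simp
          · exact lt_of_le_of_lt (measure_mono hsub) (hfin x₀ _ h0)
        exact this.ne
    have : {i : T | 0 < μ (ball (i : X) (ε / 2))} = Set.univ :=
      Set.eq_univ_of_forall fun i => hpos _ _ (by linarith)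
    rw [this, Set.countable_univ_iff] at key
    exact Set.countable_coe_iff.mp key
  exact ⟨S, hcount, hdense⟩

/-- **Tent space duality pairing inequality.** For `α > 0`, `p,q ∈ (1,∞)` with
Hölder conjugates `p' = p/(p-1)`, `q' = q/(q-1)`, and `f,g` measurable on `X⁺`,
`∬_{X⁺} |f||g| dμ dt/t ≤ ‖A_q^α(f)‖_{L^p(X)} ‖A_{q'}^α(g)‖_{L^{p'}(X)}`. -/
theorem tent_pairing_inequality [MetricSpace X] [MeasurableSpace X] [BorelSpace X]
    (μ : Measure X) [SigmaFinite μ]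
    (hpos : ∀ (x : X) (r : ℝ), 0 < r → 0 < μ (ball x r))
    (hfin : ∀ (x : X) (r : ℝ), 0 < r → μ (ball x r) < ∞)
    (α p q : ℝ) (hα : 0 < α) (hp : 1 < p) (hq : 1 < q)
    (f g : X × ℝ → ℝ) (hf : Measurable f) (hg : Measurable g) :
    ∫⁻ pt, ENNReal.ofReal (|f pt| * |g pt|) ∂upHalf μ
      ≤ tNorm μ p q α f * tNorm μ (p/(p-1)) (q/(q-1)) α g := by
  haveI : SecondCountableTopology X := secondCountable_of_ball_pos_finite μ hpos hfin
  haveI : SFinite (upHalf μ) := by unfold upHalf; infer_instance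
  set ν := upHalf μ with hνdef
  set q' := q / (q - 1) with hq'def
  have hqq' : q.HolderConjugate q' := Real.HolderConjugate.conjExponent hq
  have hpp' : p.HolderConjugate (p / (p - 1)) := Real.HolderConjugate.conjExponent hp
  have hq0 : q ≠ 0 := hqq'.ne_zero
  have hq'0 : q' ≠ 0 := hqq'.symm.ne_zero
  have hq'1 : 1 < q' := hqq'.symm.lt
  -- measurability of the ball-volume function
  have hVmeas : Measurable fun pt : X × ℝ => μ (ball pt.1 (α * pt.2)) := by
    have hs : MeasurableSet {z : (X × ℝ) × X | dist z.2 z.1.1 < α * z.1.2} := by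
      apply measurableSet_lt
      · exact measurable_dist.comp (measurable_snd.prodMk measurable_fst.fst)
      · exact measurable_const.mul measurable_fst.snd
    exact measurable_measure_prodMk_left (ν := μ) hs
  -- cones are measurable
  have hcone : ∀ x : X, MeasurableSet (coneAt α x) := by
    intro x
    apply measurableSet_lt
    · exact measurable_dist.comp (measurable_fst.prodMk measurable_const)
    · exact measurable_const.mul measurable_snd
  have hSmeas : MeasurableSet {z : X × (X × ℝ) | dist z.2.1 z.1 < α * z.2.2} := by
    apply measurableSet_lt
    · exact measurable_dist.comp (measurable_snd.fst.prodMk measurable_fst)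
    · exact measurable_const.mul measurable_snd.snd
  -- indicator of the cone, as a jointly measurable function
  have hindmeas : ∀ F : X × ℝ → ℝ≥0∞, Measurable F →
      Measurable fun z : X × (X × ℝ) => (coneAt α z.1).indicator F z.2 := by
    intro F hF
    have huncurry : (fun z : X × (X × ℝ) => (coneAt α z.1).indicator F z.2)
        = {z : X × (X × ℝ) | dist z.2.1 z.1 < α * z.2.2}.indicator (fun z => F z.2) := by
      ext z
      by_cases hz : dist z.2.1 z.1 < α * z.2.2 <;>
        simp [Set.indicator_apply, coneAt, hz]
    rw [huncurry]
    exact (hF.comp measurable_snd).indicator hSmeas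
  -- a.e. on `ν`, the second coordinate is positive
  have hae : ∀ᵐ pt ∂ν, 0 < pt.2 := by
    rw [ae_iff]
    have hset : {pt : X × ℝ | ¬ 0 < pt.2} = (Set.univ : Set X) ×ˢ Set.Iic (0:ℝ) := by
      ext pt; simp [not_lt]
    rw [hνdef, upHalf, hset, Measure.prod_prod]
    have h2 : ((volume.restrict (Set.Ioi (0:ℝ))).withDensity
        fun t => ENNReal.ofReal t⁻¹) (Set.Iic 0) = 0 := by
      rw [withDensity_apply _ measurableSet_Iic]
      apply setLIntegral_measure_zero
      rw [Measure.restrict_apply measurableSet_Iic]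
      simp [Set.Iic_inter_Ioi]
    rw [h2, mul_zero]
  -- the Fubini identity
  have fubini : ∀ G : X × ℝ → ℝ≥0∞, Measurable G →
      ∫⁻ x, ∫⁻ pt in coneAt α x, G pt ∂ν ∂μ
        = ∫⁻ pt, G pt * μ (ball pt.1 (α * pt.2)) ∂ν := by
    intro G hG
    calc ∫⁻ x, ∫⁻ pt in coneAt α x, G pt ∂ν ∂μ
        = ∫⁻ x, ∫⁻ pt, (coneAt α x).indicator G pt ∂ν ∂μ := by
          simp_rw [lintegral_indicator (hcone _)]
      _ = ∫⁻ pt, ∫⁻ x, (coneAt α x).indicator G pt ∂μ ∂ν := by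
          apply lintegral_lintegral_swap
          exact (hindmeas G hG).aemeasurable
      _ = ∫⁻ pt, G pt * μ (ball pt.1 (α * pt.2)) ∂ν := by
          apply lintegral_congr
          intro pt
          have hind : ∀ x : X, (coneAt α x).indicator G pt
              = (ball pt.1 (α * pt.2)).indicator (fun _ => G pt) x := by
            intro x
            by_cases hx : x ∈ ball pt.1 (α * pt.2)
            · rw [Set.indicator_of_mem hx,
                Set.indicator_of_mem (by simpa [coneAt, dist_comm] using hx) G]
            · rw [Set.indicator_of_notMem hx,
                Set.indicator_of_notMem (by simpa [coneAt, dist_comm] using hx) G]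
          rw [lintegral_congr hind, lintegral_indicator_const measurableSet_ball]
  -- the two Hölder factor functions
  set Ff : X × ℝ → ℝ≥0∞ :=
    fun pt => ENNReal.ofReal (|f pt| ^ q) / μ (ball pt.1 (α * pt.2)) with hFfdef
  set Fg : X × ℝ → ℝ≥0∞ :=
    fun pt => ENNReal.ofReal (|g pt| ^ q') / μ (ball pt.1 (α * pt.2)) with hFgdef
  have hFfmeas : Measurable Ff := by
    apply Measurable.div _ hVmeas
    exact ENNReal.measurable_ofReal.comp
      ((Real.continuous_rpow_const (le_of_lt (lt_trans zero_lt_one hq))).measurable.comp hf.abs)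
  have hFgmeas : Measurable Fg := by
    apply Measurable.div _ hVmeas
    exact ENNReal.measurable_ofReal.comp
      ((Real.continuous_rpow_const (le_of_lt (lt_trans zero_lt_one hq'1))).measurable.comp hg.abs)
  -- pointwise splitting
  have key : ∀ᵐ pt ∂ν, ENNReal.ofReal (|f pt| * |g pt|)
      = (Ff pt ^ (1/q) * Fg pt ^ (1/q')) * μ (ball pt.1 (α * pt.2)) := by
    filter_upwards [hae] with pt hpt
    have hr : 0 < α * pt.2 := mul_pos hα hpt
    have hV0 : μ (ball pt.1 (α * pt.2)) ≠ 0 := (hpos _ _ hr).ne'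
    have hVt : μ (ball pt.1 (α * pt.2)) ≠ ∞ := (hfin _ _ hr).ne
    have habs : ∀ (a r : ℝ), 1 < r →
        (ENNReal.ofReal (|a| ^ r)) ^ (1/r) = ENNReal.ofReal |a| := by
      intro a r hr1
      have hrpos : (0:ℝ) < r := lt_trans zero_lt_one hr1
      rw [ENNReal.ofReal_rpow_of_nonneg (x := |a| ^ r) (by positivity) (by positivity),
        ← Real.rpow_mul (abs_nonneg a), mul_one_div_cancel (ne_of_gt hrpos), Real.rpow_one]
    show _ = ((ENNReal.ofReal (|f pt| ^ q) / μ (ball pt.1 (α * pt.2))) ^ (1/q)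
      * (ENNReal.ofReal (|g pt| ^ q') / μ (ball pt.1 (α * pt.2))) ^ (1/q'))
      * μ (ball pt.1 (α * pt.2))
    have h1 : (ENNReal.ofReal (|f pt| ^ q) / μ (ball pt.1 (α * pt.2))) ^ (1/q)
        = ENNReal.ofReal |f pt| * ((μ (ball pt.1 (α * pt.2)))⁻¹) ^ (1/q) := by
      rw [ENNReal.div_rpow_of_nonneg _ _ (by positivity : (0:ℝ) ≤ 1/q),
        habs (f pt) q hq, div_eq_mul_inv, ← ENNReal.inv_rpow]
    have h2 : (ENNReal.ofReal (|g pt| ^ q') / μ (ball pt.1 (α * pt.2))) ^ (1/q')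
        = ENNReal.ofReal |g pt| * ((μ (ball pt.1 (α * pt.2)))⁻¹) ^ (1/q') := by
      rw [ENNReal.div_rpow_of_nonneg _ _ (by positivity : (0:ℝ) ≤ 1/q'),
        habs (g pt) q' hq'1, div_eq_mul_inv, ← ENNReal.inv_rpow]
    rw [h1, h2, ENNReal.ofReal_mul (abs_nonneg _)]
    have hVsplit : (μ (ball pt.1 (α * pt.2)))⁻¹ ^ (1/q)
        * (μ (ball pt.1 (α * pt.2)))⁻¹ ^ (1/q') * μ (ball pt.1 (α * pt.2)) = 1 := by
      rw [← ENNReal.rpow_add_of_nonneg _ _ (by positivity) (by positivity)]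
      have : 1/q + 1/q' = 1 := by
        rw [one_div, one_div]; exact hqq'.inv_add_inv_eq_one
      rw [this, ENNReal.rpow_one, ENNReal.inv_mul_cancel hV0 hVt]
    calc ENNReal.ofReal |f pt| * ENNReal.ofReal |g pt|
        = (ENNReal.ofReal |f pt| * ENNReal.ofReal |g pt|)
          * ((μ (ball pt.1 (α * pt.2)))⁻¹ ^ (1/q)
            * (μ (ball pt.1 (α * pt.2)))⁻¹ ^ (1/q') * μ (ball pt.1 (α * pt.2))) := by
          rw [hVsplit, mul_one]
      _ = ENNReal.ofReal |f pt| * (μ (ball pt.1 (α * pt.2)))⁻¹ ^ (1/q)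
          * (ENNReal.ofReal |g pt| * (μ (ball pt.1 (α * pt.2)))⁻¹ ^ (1/q'))
          * μ (ball pt.1 (α * pt.2)) := by ring
  -- measurability of the `A`-functionals
  have hAmeas : ∀ (r : ℝ) (F : X × ℝ → ℝ≥0∞), Measurable F →
      Measurable fun x => (∫⁻ pt in coneAt α x, F pt ∂ν) ^ (1/r) := by
    intro r F hF
    have h1 : Measurable fun x => ∫⁻ pt, (coneAt α x).indicator F pt ∂ν :=
      (hindmeas F hF).lintegral_prod_right'
    have h2 : (fun x => (∫⁻ pt in coneAt α x, F pt ∂ν) ^ (1/r))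
        = fun x => (∫⁻ pt, (coneAt α x).indicator F pt ∂ν) ^ (1/r) := by
      funext x; rw [lintegral_indicator (hcone x)]
    rw [h2]
    exact ENNReal.continuous_rpow_const.measurable.comp h1
  -- main chain
  have hGmeas : Measurable fun pt => Ff pt ^ (1/q) * Fg pt ^ (1/q') :=
    (ENNReal.continuous_rpow_const.measurable.comp hFfmeas).mul
      (ENNReal.continuous_rpow_const.measurable.comp hFgmeas)
  calc ∫⁻ pt, ENNReal.ofReal (|f pt| * |g pt|) ∂ν
      = ∫⁻ pt, (Ff pt ^ (1/q) * Fg pt ^ (1/q')) * μ (ball pt.1 (α * pt.2)) ∂ν :=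
        lintegral_congr_ae key
    _ = ∫⁻ x, ∫⁻ pt in coneAt α x, Ff pt ^ (1/q) * Fg pt ^ (1/q') ∂ν ∂μ :=
        (fubini _ hGmeas).symm
    _ ≤ ∫⁻ x, Afun μ q α f x * Afun μ q' α g x ∂μ := by
        apply lintegral_mono
        intro x
        have hm1 : Measurable fun pt => Ff pt ^ (1/q) :=
          ENNReal.continuous_rpow_const.measurable.comp hFfmeas
        have hm2 : Measurable fun pt => Fg pt ^ (1/q') :=
          ENNReal.continuous_rpow_const.measurable.comp hFgmeas
        have H := ENNReal.lintegral_mul_le_Lp_mul_Lq (ν.restrict (coneAt α x)) hqq'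
          (f := fun pt => Ff pt ^ (1/q)) (g := fun pt => Fg pt ^ (1/q'))
          hm1.aemeasurable hm2.aemeasurable
        have e1 : ∀ a : X × ℝ, (Ff a ^ (1/q)) ^ q = Ff a := by
          intro a; rw [← ENNReal.rpow_mul, one_div_mul_cancel hq0, ENNReal.rpow_one]
        have e2 : ∀ a : X × ℝ, (Fg a ^ (1/q')) ^ q' = Fg a := by
          intro a; rw [← ENNReal.rpow_mul, one_div_mul_cancel hq'0, ENNReal.rpow_one]
        simp only [Pi.mul_apply, e1, e2] at H
        show ∫⁻ pt in coneAt α x, Ff pt ^ (1/q) * Fg pt ^ (1/q') ∂ν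
          ≤ (∫⁻ pt in coneAt α x, Ff pt ∂ν) ^ (1/q)
            * (∫⁻ pt in coneAt α x, Fg pt ∂ν) ^ (1/q')
        exact H
    _ ≤ tNorm μ p q α f * tNorm μ (p/(p-1)) q' α g := by
        have hAf : Measurable (Afun μ q α f) := hAmeas q Ff hFfmeas
        have hAg : Measurable (Afun μ q' α g) := hAmeas q' Fg hFgmeas
        have H2 := ENNReal.lintegral_mul_le_Lp_mul_Lq μ hpp'
          hAf.aemeasurable hAg.aemeasurable
        exact H2
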